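/- Let θ̄ > 0 and let g : ℝ → ℝ be integrable on [0, θ̄]. Then the supremum, over all nondecreasing functions x : [0, θ̄] → [0, 1], of ∫_0^{θ̄} x(z)·g(z) dz equals sup_{p ∈ [0, θ̄]} ∫_p^{θ̄} g(z) dz. In particular, the supremum over monotone allocations is attained (in the limit) by a threshold (bang-bang) allocation x(z) = 𝟙{z ≥ p}. -/

import Mathlib

open intervalIntegral MeasureTheory Set

private lemma threshold_integral (θ p : ℝ) (hθ : 0 < θ) (hp : p ∈ Set.Icc 0 θ)
    (g : ℝ → ℝ) (hg : IntervalIntegrable g MeasureTheory.volume 0 θ) :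
    (∫ z in (0:ℝ)..θ, (if p < z then (1:ℝ) else 0) * g z) = ∫ z in p..θ, g z := by
  have hgInt : IntegrableOn g (Set.Ioc 0 θ) :=
    (intervalIntegrable_iff_integrableOn_Ioc_of_le hθ.le).mp hg
  have hfun : (fun z => (if p < z then (1:ℝ) else 0) * g z) = (Set.Ioi p).indicator g := by
    funext z
    by_cases h : p < z <;> simp [Set.indicator_apply, h]
  have hInd : IntegrableOn ((Set.Ioi p).indicator g) (Set.Ioc 0 θ) :=
    hgInt.indicator measurableSet_Ioi
  rw [intervalIntegral.integral_of_le hθ.le, intervalIntegral.integral_of_le hp.2, hfun]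
  rw [← Set.Ioc_union_Ioc_eq_Ioc hp.1 hp.2,
    MeasureTheory.setIntegral_union (Set.Ioc_disjoint_Ioc_of_le le_rfl) measurableSet_Ioc
      (hInd.mono_set (Set.Ioc_subset_Ioc_right hp.2))
      (hInd.mono_set (Set.Ioc_subset_Ioc_left hp.1))]
  have h1 : ∫ z in Set.Ioc 0 p, (Set.Ioi p).indicator g z = 0 := by
    rw [MeasureTheory.setIntegral_congr_fun (g := fun _ => (0:ℝ)) measurableSet_Ioc
      (fun z hz => by simp [Set.indicator_apply, not_lt.mpr hz.2])]
    simp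
  have h2 : ∫ z in Set.Ioc p θ, (Set.Ioi p).indicator g z = ∫ z in Set.Ioc p θ, g z := by
    apply MeasureTheory.setIntegral_congr_fun measurableSet_Ioc
    intro z hz
    simp [Set.indicator_apply, hz.1]
  rw [h1, h2, zero_add]

private lemma key_bound (θ : ℝ) (hθ : 0 < θ) (g : ℝ → ℝ)
    (hg : IntervalIntegrable g MeasureTheory.volume 0 θ)
    (M : ℝ) (hM0 : 0 ≤ M)
    (hM : ∀ p ∈ Set.Icc (0:ℝ) θ, (∫ z in p..θ, g z) ≤ M)
    (x : ℝ → ℝ) (hx : Monotone x) (hx01 : ∀ z, x z ∈ Set.Icc (0:ℝ) 1) :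
    (∫ z in (0:ℝ)..θ, x z * g z) ≤ M := by
  classical
  set μ : Measure ℝ := volume.restrict (Set.Ioc (0:ℝ) 1) with hμdef
  set ν : Measure ℝ := volume.restrict (Set.Ioc (0:ℝ) θ) with hνdef
  haveI : IsFiniteMeasure μ := by
    constructor
    rw [hμdef, Measure.restrict_apply MeasurableSet.univ, Set.univ_inter, Real.volume_Ioc]
    exact ENNReal.ofReal_lt_top
  have hgInt : IntegrableOn g (Set.Ioc 0 θ) :=
    (intervalIntegrable_iff_integrableOn_Ioc_of_le hθ.le).mp hg
  set f : ℝ → ℝ → ℝ := fun t z => if t ≤ x z then g z else 0 with hfdef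
  have hxm : Measurable x := hx.measurable
  have hS : MeasurableSet {p : ℝ × ℝ | p.1 ≤ x p.2} :=
    measurableSet_le measurable_fst (hxm.comp measurable_snd)
  have hFeq : Function.uncurry f = ({p : ℝ × ℝ | p.1 ≤ x p.2}).indicator (fun p => g p.2) := by
    funext p
    by_cases h : p.1 ≤ x p.2 <;> simp [hfdef, Function.uncurry, Set.indicator_apply, h]
  have hFmeas : AEStronglyMeasurable (Function.uncurry f) (μ.prod ν) := by
    rw [hFeq]
    exact (hgInt.aestronglyMeasurable.comp_snd).indicator hS
  have hbound : Integrable (fun p : ℝ × ℝ => (1:ℝ) * |g p.2|) (μ.prod ν) :=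
    (integrable_const (1:ℝ)).mul_prod hgInt.norm
  have hF : Integrable (Function.uncurry f) (μ.prod ν) := by
    apply Integrable.mono' hbound hFmeas
    apply Filter.Eventually.of_forall
    intro p
    by_cases h : p.1 ≤ x p.2 <;> simp [hfdef, Function.uncurry, h, abs_nonneg]
  -- inner integral over t equals x z * g z
  have hinner : ∀ z : ℝ, (∫ t, f t z ∂μ) = x z * g z := by
    intro z
    have h01 := hx01 z
    have heq : (fun t => f t z) = (Set.Iic (x z)).indicator (fun _ => g z) := by
      funext t
      by_cases h : t ≤ x z <;> simp [hfdef, Set.indicator_apply, h]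
    rw [heq, hμdef, MeasureTheory.setIntegral_indicator measurableSet_Iic,
      MeasureTheory.setIntegral_const]
    rw [Set.Ioc_inter_Iic, min_eq_right h01.2, Real.volume_real_Ioc_of_le h01.1]
    rw [sub_zero]
    rw [smul_eq_mul]
  -- outer bound for each t
  have houter : ∀ t ∈ Set.Ioc (0:ℝ) 1, (∫ z, f t z ∂ν) ≤ M := by
    intro t ht
    set T : Set ℝ := {z ∈ Set.Icc (0:ℝ) θ | t ≤ x z} ∪ {θ} with hTdef
    have hθT : θ ∈ T := Or.inr rfl
    have hTne : T.Nonempty := ⟨θ, hθT⟩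
    have hTbdd : BddBelow T := by
      refine ⟨0, ?_⟩
      rintro s (⟨⟨h0, _⟩, _⟩ | rfl)
      · exact h0
      · exact hθ.le
    set p : ℝ := sInf T with hpdef
    have hp0 : 0 ≤ p := by
      apply le_csInf hTne
      rintro s (⟨⟨h0, _⟩, _⟩ | rfl)
      · exact h0
      · exact hθ.le
    have hpθ : p ≤ θ := csInf_le hTbdd hθT
    have hftInd : (fun z => f t z) = ({z : ℝ | t ≤ x z}).indicator g := by
      funext z
      by_cases h : t ≤ x z <;> simp [hfdef, Set.indicator_apply, h]
    have hZS : MeasurableSet {z : ℝ | t ≤ x z} := measurableSet_le measurable_const hxm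
    have hftInt : IntegrableOn (fun z => f t z) (Set.Ioc 0 θ) := by
      rw [hftInd]; exact hgInt.indicator hZS
    have hsplit : (∫ z, f t z ∂ν) =
        (∫ z in Set.Ioc 0 p, f t z) + ∫ z in Set.Ioc p θ, f t z := by
      rw [hνdef, ← Set.Ioc_union_Ioc_eq_Ioc hp0 hpθ,
        MeasureTheory.setIntegral_union (Set.Ioc_disjoint_Ioc_of_le le_rfl) measurableSet_Ioc
          (hftInt.mono_set (by rw [← Set.Ioc_union_Ioc_eq_Ioc hp0 hpθ]; exact Set.subset_union_left))
          (hftInt.mono_set (by rw [← Set.Ioc_union_Ioc_eq_Ioc hp0 hpθ]; exact Set.subset_union_right))]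
    have h1 : (∫ z in Set.Ioc 0 p, f t z) = 0 := by
      rw [MeasureTheory.integral_Ioc_eq_integral_Ioo]
      rw [MeasureTheory.setIntegral_congr_fun measurableSet_Ioo
        (g := fun _ => (0:ℝ)) ?_]
      · simp
      · intro z hz
        have hzT : z ∉ T := notMem_of_lt_csInf hz.2 hTbdd
        have hzIcc : z ∈ Set.Icc (0:ℝ) θ := ⟨hz.1.le, le_trans hz.2.le hpθ⟩
        have : ¬ t ≤ x z := by
          intro hcon
          exact hzT (Or.inl ⟨hzIcc, hcon⟩)
        simp [hfdef, this]
    have h2 : (∫ z in Set.Ioc p θ, f t z) = ∫ z in Set.Ioc p θ, g z := by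
      apply MeasureTheory.setIntegral_congr_fun measurableSet_Ioc
      intro z hz
      obtain ⟨s, hsT, hsz⟩ := exists_lt_of_csInf_lt hTne hz.1
      rcases hsT with ⟨⟨_, _⟩, hts⟩ | hs
      · have : t ≤ x z := le_trans hts (hx hsz.le)
        simp [hfdef, this]
      · rw [Set.mem_singleton_iff] at hs
        exact absurd (hs ▸ hsz) (not_lt.mpr hz.2)
    rw [hsplit, h1, h2, zero_add, ← intervalIntegral.integral_of_le hpθ]
    exact hM p ⟨hp0, hpθ⟩
  -- Fubini
  have hswap := MeasureTheory.integral_integral_swap hF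
  have hIntOuter : Integrable (fun t => ∫ z, f t z ∂ν) μ := hF.integral_prod_left
  have hmain : (∫ z in (0:ℝ)..θ, x z * g z) = ∫ t, (∫ z, f t z ∂ν) ∂μ := by
    rw [intervalIntegral.integral_of_le hθ.le]
    calc ∫ z in Set.Ioc (0:ℝ) θ, x z * g z
        = ∫ z, (∫ t, f t z ∂μ) ∂ν := by
          rw [hνdef]
          exact (MeasureTheory.setIntegral_congr_fun measurableSet_Ioc
            (fun z _ => (hinner z).symm))
      _ = ∫ t, (∫ z, f t z ∂ν) ∂μ := hswap.symm
  rw [hmain]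
  calc ∫ t, (∫ z, f t z ∂ν) ∂μ ≤ ∫ t, M ∂μ := by
        apply MeasureTheory.integral_mono_ae hIntOuter (integrable_const M)
        rw [hμdef]
        exact (MeasureTheory.ae_restrict_iff' measurableSet_Ioc).mpr
          (Filter.Eventually.of_forall houter)
    _ = M := by
        rw [MeasureTheory.integral_const, hμdef, measureReal_restrict_apply MeasurableSet.univ,
          Set.univ_inter, Real.volume_real_Ioc_of_le zero_le_one]
        simp

/-- **Bang-bang (threshold) optimality over monotone allocations.**
For integrable `g` on `[0, θ̄]`, the supremum over nondecreasing allocations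
`x : [0, θ̄] → [0, 1]` of `∫_0^{θ̄} x(z) g(z) dz` equals the supremum over
threshold (bang-bang) allocations, i.e. `sup_{p ∈ [0, θ̄]} ∫_p^{θ̄} g(z) dz`. -/
theorem monotone_allocation_bang_bang
    (θ : ℝ) (hθ : 0 < θ) (g : ℝ → ℝ)
    (hg : IntervalIntegrable g MeasureTheory.volume 0 θ) :
    sSup ((fun x : ℝ → ℝ => ∫ z in (0:ℝ)..θ, x z * g z) ''
        {x | MonotoneOn x (Set.Icc 0 θ) ∧
          ∀ z ∈ Set.Icc (0:ℝ) θ, x z ∈ Set.Icc (0:ℝ) 1})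
      = sSup ((fun p => ∫ z in p..θ, g z) '' Set.Icc 0 θ) := by
  classical
  have hgInt : IntegrableOn g (Set.Ioc 0 θ) :=
    (intervalIntegrable_iff_integrableOn_Ioc_of_le hθ.le).mp hg
  set G : ℝ → ℝ := fun p => ∫ z in p..θ, g z with hGdef
  have hGcont : ContinuousOn G (Set.Icc 0 θ) := by
    have h : IntegrableOn g (Set.uIcc 0 θ) := by
      rw [Set.uIcc_of_le hθ.le]
      exact (integrableOn_Icc_iff_integrableOn_Ioc).mpr hgInt
    have := continuousOn_primitive_interval_left h
    rwa [Set.uIcc_of_le hθ.le] at this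
  obtain ⟨ps, hpsmem, hpsmax⟩ :=
    isCompact_Icc.exists_isMaxOn (Set.nonempty_Icc.mpr hθ.le) hGcont
  set M : ℝ := G ps with hMdef
  have hMub : ∀ p ∈ Set.Icc (0:ℝ) θ, G p ≤ M := fun p hp => hpsmax hp
  have hM0 : 0 ≤ M := by
    have := hMub θ ⟨hθ.le, le_rfl⟩
    simp only [hGdef, intervalIntegral.integral_same] at this ⊢
    linarith [hpsmax (Set.mem_Icc.mpr ⟨hθ.le, le_rfl⟩)]
  -- the threshold allocation at ps
  set xs : ℝ → ℝ := fun z => if ps < z then 1 else 0 with hxsdef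
  have hxsmono : MonotoneOn xs (Set.Icc 0 θ) := by
    intro a _ b _ hab
    by_cases h : ps < a
    · simp [hxsdef, h, lt_of_lt_of_le h hab]
    · by_cases h' : ps < b <;> simp [hxsdef, h, h']
  have hxs01 : ∀ z ∈ Set.Icc (0:ℝ) θ, xs z ∈ Set.Icc (0:ℝ) 1 := by
    intro z _
    by_cases h : ps < z <;> simp [hxsdef, h]
  have hxsval : (∫ z in (0:ℝ)..θ, xs z * g z) = M :=
    threshold_integral θ ps hθ hpsmem g hg
  -- membership of M in the LHS image set
  have hMmemL : M ∈ ((fun x : ℝ → ℝ => ∫ z in (0:ℝ)..θ, x z * g z) ''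
      {x | MonotoneOn x (Set.Icc 0 θ) ∧
        ∀ z ∈ Set.Icc (0:ℝ) θ, x z ∈ Set.Icc (0:ℝ) 1}) :=
    ⟨xs, ⟨hxsmono, hxs01⟩, hxsval⟩
  -- every element of LHS set is ≤ M
  have hLub : ∀ a ∈ ((fun x : ℝ → ℝ => ∫ z in (0:ℝ)..θ, x z * g z) ''
      {x | MonotoneOn x (Set.Icc 0 θ) ∧
        ∀ z ∈ Set.Icc (0:ℝ) θ, x z ∈ Set.Icc (0:ℝ) 1}), a ≤ M := by
    rintro _ ⟨x, ⟨hmono, h01⟩, rfl⟩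
    set x' : ℝ → ℝ := fun z => x (min (max z 0) θ) with hx'def
    have hclamp : ∀ z : ℝ, min (max z 0) θ ∈ Set.Icc (0:ℝ) θ :=
      fun z => ⟨le_min (le_max_right z 0) hθ.le, min_le_right _ _⟩
    have hx'mono : Monotone x' := by
      intro a b hab
      exact hmono (hclamp a) (hclamp b)
        (min_le_min (max_le_max hab le_rfl) le_rfl)
    have hx'01 : ∀ z, x' z ∈ Set.Icc (0:ℝ) 1 := fun z => h01 _ (hclamp z)
    have heq : (∫ z in (0:ℝ)..θ, x z * g z) = ∫ z in (0:ℝ)..θ, x' z * g z := by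
      apply intervalIntegral.integral_congr
      intro z hz
      rw [Set.uIcc_of_le hθ.le] at hz
      have : min (max z 0) θ = z := by
        rw [max_eq_left hz.1, min_eq_left hz.2]
      simp [hx'def, this]
    show (∫ z in (0:ℝ)..θ, x z * g z) ≤ M
    rw [heq]
    exact key_bound θ hθ g hg M hM0 hMub x' hx'mono hx'01
  apply le_antisymm
  · apply csSup_le ⟨M, hMmemL⟩
    intro a ha
    calc a ≤ M := hLub a ha
      _ ≤ sSup ((fun p => ∫ z in p..θ, g z) '' Set.Icc 0 θ) := by
          apply le_csSup
          · exact ⟨M, by rintro _ ⟨p, hp, rfl⟩; exact hMub p hp⟩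
          · exact ⟨ps, hpsmem, rfl⟩
  · apply csSup_le ((Set.nonempty_Icc.mpr hθ.le).image _)
    rintro _ ⟨p, hp, rfl⟩
    calc (∫ z in p..θ, g z) ≤ M := hMub p hp
      _ ≤ _ := le_csSup ⟨M, hLub⟩ hMmemL
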